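/- The system ⟨R_0, T_D⟩ is based on atomic entailment: for all propositional formulas φ, ψ, the formula φ → ψ belongs to Cn_0(R_0, T_D) if and only if ψ results atomically from φ on the ground of ⟨R_0, T_D⟩, i.e. if and only if, with L = Cn_0(R_0, T_D), both: (1) for every substitution e, h^e(φ) ∈ L implies h^e(ψ) ∈ L and P_0(h^e(φ)) ⊆ P_0(h^e(ψ)); and (2) for every substitution e, h^e((∼ψ → ∼φ) → ∼φ) ∈ L implies h^e(∼φ) ∈ L and P_0(h^e(∼ψ)) ⊆ P_0(h^e(∼φ)). -/

import Mathlib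

/-- Propositional formulas built from propositional variables (indexed by `ℕ`)
using →, ∼, ∨, ∧, ≡. -/
inductive PropForm : Type
  | var : ℕ → PropForm
  | neg : PropForm → PropForm
  | imp : PropForm → PropForm → PropForm
  | disj : PropForm → PropForm → PropForm
  | conj : PropForm → PropForm → PropForm
  | equiv : PropForm → PropForm → PropForm

/-- The implication table of the matrix 𝔐_D. -/
def fimp : Fin 3 → Fin 3 → Fin 3 := ![![1, 1, 1], ![0, 1, 0], ![0, 1, 2]]
/-- The negation table of the matrix 𝔐_D. -/
def fneg : Fin 3 → Fin 3 := ![1, 0, 2]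
/-- The disjunction table of the matrix 𝔐_D. -/
def fdisj : Fin 3 → Fin 3 → Fin 3 := ![![0, 1, 0], ![1, 1, 1], ![0, 1, 2]]
/-- The conjunction table of the matrix 𝔐_D. -/
def fconj : Fin 3 → Fin 3 → Fin 3 := ![![0, 0, 0], ![0, 1, 1], ![0, 1, 2]]
/-- The equivalence table of the matrix 𝔐_D. -/
def fequiv : Fin 3 → Fin 3 → Fin 3 := ![![1, 0, 0], ![0, 1, 0], ![0, 0, 2]]

/-- Value of a propositional formula in the matrix 𝔐_D under a valuation `v`. -/
def evalD (v : ℕ → Fin 3) : PropForm → Fin 3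
  | .var n => v n
  | .neg φ => fneg (evalD v φ)
  | .imp φ ψ => fimp (evalD v φ) (evalD v ψ)
  | .disj φ ψ => fdisj (evalD v φ) (evalD v ψ)
  | .conj φ ψ => fconj (evalD v φ) (evalD v ψ)
  | .equiv φ ψ => fequiv (evalD v φ) (evalD v ψ)

/-- T_D : the set of propositional formulas valid in 𝔐_D
(every valuation gives a designated value, i.e. 1 or 2). -/
def TD : Set PropForm := {φ | ∀ v : ℕ → Fin 3, evalD v φ = 1 ∨ evalD v φ = 2}
/-- P_0(φ) : the set of propositional variables occurring in `φ`. -/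
def PropForm.vars : PropForm → Set ℕ
  | .var n => {n}
  | .neg φ => φ.vars
  | .imp φ ψ => φ.vars ∪ ψ.vars
  | .disj φ ψ => φ.vars ∪ ψ.vars
  | .conj φ ψ => φ.vars ∪ ψ.vars
  | .equiv φ ψ => φ.vars ∪ ψ.vars
/-- h^e : the endomorphism of the set of propositional formulas induced by a
substitution `e` of formulas for propositional variables. -/
def substP (e : ℕ → PropForm) : PropForm → PropForm
  | .var n => e n
  | .neg φ => .neg (substP e φ)
  | .imp φ ψ => .imp (substP e φ) (substP e ψ)
  | .disj φ ψ => .disj (substP e φ) (substP e ψ)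
  | .conj φ ψ => .conj (substP e φ) (substP e ψ)
  | .equiv φ ψ => .equiv (substP e φ) (substP e ψ)

/-- Cn_0(R_0, X) : the smallest set of propositional formulas containing `X` and
closed under modus ponens (r_0^0). -/
inductive Cn0 (X : Set PropForm) : PropForm → Prop
  | base {φ : PropForm} : φ ∈ X → Cn0 X φ
  | mp {φ ψ : PropForm} : Cn0 X (.imp φ ψ) → Cn0 X φ → Cn0 X ψ


/-! ### Auxiliary lemmas -/

section Aux

lemma fimp_mp : ∀ a b : Fin 3, (fimp a b = 1 ∨ fimp a b = 2) →
    (a = 1 ∨ a = 2) → (b = 1 ∨ b = 2) := by decide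

lemma TD_mp {f g : PropForm} (h1 : PropForm.imp f g ∈ TD) (h2 : f ∈ TD) : g ∈ TD := by
  intro v
  have h1' := h1 v
  have h2' := h2 v
  simp only [evalD] at h1'
  exact fimp_mp _ _ h1' h2'

lemma cn0_TD {f : PropForm} : Cn0 TD f ↔ f ∈ TD := by
  constructor
  · intro h
    induction h with
    | base h => exact h
    | mp _ _ ih1 ih2 => exact TD_mp ih1 ih2
  · exact Cn0.base

lemma eval_subst (e : ℕ → PropForm) (v : ℕ → Fin 3) (f : PropForm) :
    evalD v (substP e f) = evalD (fun n => evalD v (e n)) f := by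
  induction f with
  | var n => rfl
  | neg f ih => simp [substP, evalD, ih]
  | imp f g ih1 ih2 => simp [substP, evalD, ih1, ih2]
  | disj f g ih1 ih2 => simp [substP, evalD, ih1, ih2]
  | conj f g ih1 ih2 => simp [substP, evalD, ih1, ih2]
  | equiv f g ih1 ih2 => simp [substP, evalD, ih1, ih2]

lemma subst_TD {f : PropForm} (e : ℕ → PropForm) (h : f ∈ TD) : substP e f ∈ TD := by
  intro v
  rw [eval_subst]
  exact h _

lemma mem_vars_subst (e : ℕ → PropForm) (f : PropForm) (m : ℕ) :
    m ∈ (substP e f).vars ↔ ∃ n ∈ f.vars, m ∈ (e n).vars := by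
  induction f with
  | var n => simp [substP, PropForm.vars]
  | neg f ih => simpa [substP, PropForm.vars] using ih
  | imp f g ih1 ih2 =>
      simp only [substP, PropForm.vars, Set.mem_union, ih1, ih2]
      aesop
  | disj f g ih1 ih2 =>
      simp only [substP, PropForm.vars, Set.mem_union, ih1, ih2]
      aesop
  | conj f g ih1 ih2 =>
      simp only [substP, PropForm.vars, Set.mem_union, ih1, ih2]
      aesop
  | equiv f g ih1 ih2 =>
      simp only [substP, PropForm.vars, Set.mem_union, ih1, ih2]
      aesop

lemma eval_all2 {v : ℕ → Fin 3} {f : PropForm} (h : ∀ n ∈ f.vars, v n = 2) :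
    evalD v f = 2 := by
  induction f with
  | var n => exact h n (by simp [PropForm.vars])
  | neg f ih =>
      have := ih (fun n hn => h n (by simpa [PropForm.vars] using hn))
      simp [evalD, this]; decide
  | imp f g ih1 ih2 =>
      have h1 := ih1 (fun n hn => h n (by simp [PropForm.vars]; exact Or.inl hn))
      have h2 := ih2 (fun n hn => h n (by simp [PropForm.vars]; exact Or.inr hn))
      simp [evalD, h1, h2]; decide
  | disj f g ih1 ih2 =>
      have h1 := ih1 (fun n hn => h n (by simp [PropForm.vars]; exact Or.inl hn))
      have h2 := ih2 (fun n hn => h n (by simp [PropForm.vars]; exact Or.inr hn))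
      simp [evalD, h1, h2]; decide
  | conj f g ih1 ih2 =>
      have h1 := ih1 (fun n hn => h n (by simp [PropForm.vars]; exact Or.inl hn))
      have h2 := ih2 (fun n hn => h n (by simp [PropForm.vars]; exact Or.inr hn))
      simp [evalD, h1, h2]; decide
  | equiv f g ih1 ih2 =>
      have h1 := ih1 (fun n hn => h n (by simp [PropForm.vars]; exact Or.inl hn))
      have h2 := ih2 (fun n hn => h n (by simp [PropForm.vars]; exact Or.inr hn))
      simp [evalD, h1, h2]; decide

lemma vars_of_eval2 {v : ℕ → Fin 3} {f : PropForm} (h : evalD v f = 2) :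
    ∀ n ∈ f.vars, v n = 2 := by
  induction f with
  | var n => intro m hm; simp [PropForm.vars] at hm; subst hm; exact h
  | neg f ih =>
      simp only [evalD] at h
      have : evalD v f = 2 := by revert h; generalize evalD v f = x; revert x; decide
      exact ih this
  | imp f g ih1 ih2 =>
      simp only [evalD] at h
      have h12 : evalD v f = 2 ∧ evalD v g = 2 := by
        revert h; generalize evalD v f = x; generalize evalD v g = y; revert x y; decide
      intro n hn
      simp only [PropForm.vars, Set.mem_union] at hn
      rcases hn with hn | hn
      exacts [ih1 h12.1 n hn, ih2 h12.2 n hn]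
  | disj f g ih1 ih2 =>
      simp only [evalD] at h
      have h12 : evalD v f = 2 ∧ evalD v g = 2 := by
        revert h; generalize evalD v f = x; generalize evalD v g = y; revert x y; decide
      intro n hn
      simp only [PropForm.vars, Set.mem_union] at hn
      rcases hn with hn | hn
      exacts [ih1 h12.1 n hn, ih2 h12.2 n hn]
  | conj f g ih1 ih2 =>
      simp only [evalD] at h
      have h12 : evalD v f = 2 ∧ evalD v g = 2 := by
        revert h; generalize evalD v f = x; generalize evalD v g = y; revert x y; decide
      intro n hn
      simp only [PropForm.vars, Set.mem_union] at hn
      rcases hn with hn | hn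
      exacts [ih1 h12.1 n hn, ih2 h12.2 n hn]
  | equiv f g ih1 ih2 =>
      simp only [evalD] at h
      have h12 : evalD v f = 2 ∧ evalD v g = 2 := by
        revert h; generalize evalD v f = x; generalize evalD v g = y; revert x y; decide
      intro n hn
      simp only [PropForm.vars, Set.mem_union] at hn
      rcases hn with hn | hn
      exacts [ih1 h12.1 n hn, ih2 h12.2 n hn]

lemma vars_nonempty (f : PropForm) : f.vars.Nonempty := by
  induction f with
  | var n => exact ⟨n, by simp [PropForm.vars]⟩
  | neg f ih => exact ih
  | imp f g ih1 ih2 => exact ⟨ih1.choose, by simp [PropForm.vars]; exact Or.inl ih1.choose_spec⟩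
  | disj f g ih1 ih2 => exact ⟨ih1.choose, by simp [PropForm.vars]; exact Or.inl ih1.choose_spec⟩
  | conj f g ih1 ih2 => exact ⟨ih1.choose, by simp [PropForm.vars]; exact Or.inl ih1.choose_spec⟩
  | equiv f g ih1 ih2 => exact ⟨ih1.choose, by simp [PropForm.vars]; exact Or.inl ih1.choose_spec⟩

end Aux

/-! ### The pinned substitution -/

section Pin

/-- `z → z` for `z = var 0`. -/
def gp : PropForm := .imp (.var 0) (.var 0)
/-- `r → r` for `r = var 1`. -/
def gq : PropForm := .imp (.var 1) (.var 1)

/-- Block over carrier `var 0`: value `x` unless `w 0 = 2`, in which case `2`. -/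
def blkT (x : Fin 3) : PropForm := if x = 0 then .neg gp else gp
/-- Block over carriers `var 0, var 1`: value `x` unless `w 0 = w 1 = 2`. -/
def blkO (x : Fin 3) : PropForm := if x = 0 then .neg (.conj gp gq) else .conj gp gq

lemma blkT_eval (x : Fin 3) (hx : x ≠ 2) (w : ℕ → Fin 3) :
    evalD w (blkT x) = if w 0 = 2 then 2 else x := by
  by_cases h : x = 0 <;>
    simp only [blkT, h, if_pos, if_neg, if_false, evalD, gp] <;>
    [skip; rw [show x = 1 by omega]] <;>
  · generalize w 0 = a
    revert a; decide

lemma blkO_eval (x : Fin 3) (hx : x ≠ 2) (w : ℕ → Fin 3) :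
    evalD w (blkO x) = if w 0 = 2 ∧ w 1 = 2 then 2 else x := by
  by_cases h : x = 0 <;>
    simp only [blkO, h, if_pos, if_neg, if_false, evalD, gp, gq] <;>
    [skip; rw [show x = 1 by omega]] <;>
  · generalize w 0 = a
    generalize w 1 = b
    revert a b; decide

lemma blkT_vars (x : Fin 3) : (blkT x).vars = {0} := by
  by_cases h : x = 0 <;> simp [blkT, h, gp, PropForm.vars]

lemma blkO_vars (x : Fin 3) : (blkO x).vars = {0, 1} := by
  by_cases h : x = 0 <;>
    simp [blkO, h, gp, gq, PropForm.vars, Set.union_comm, Set.union_assoc, Set.pair_comm]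

lemma blkT_eval2 (x : Fin 3) {w : ℕ → Fin 3} (hw : w 0 = 2) :
    evalD w (blkT x) = 2 := by
  by_cases h : x = 0 <;> simp [blkT, h, evalD, gp, hw] <;> decide

lemma blkO_eval2 (x : Fin 3) {w : ℕ → Fin 3} (hw : w 0 = 2) (hw1 : w 1 = 2) :
    evalD w (blkO x) = 2 := by
  by_cases h : x = 0 <;> simp [blkO, h, evalD, gp, gq, hw, hw1] <;> decide

/-- The pinned substitution determined by a valuation `v` and a classical
modification `y` on the 2-set of `v`. -/
def pinSub (v y : ℕ → Fin 3) : ℕ → PropForm :=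
  fun n => if v n = 2 then blkT (y n) else blkO (v n)

lemma pin_eval_low {v y : ℕ → Fin 3} (hy : ∀ n, y n ≠ 2) {w : ℕ → Fin 3}
    (hw : w 0 ≠ 2) (n : ℕ) :
    evalD w (pinSub v y n) = if v n = 2 then y n else v n := by
  unfold pinSub
  by_cases h : v n = 2
  · rw [if_pos h, blkT_eval (y n) (hy n), if_neg hw, if_pos h]
  · rw [if_neg h, blkO_eval (v n) h, if_neg (by tauto), if_neg h]

lemma pin_eval_mid {v y : ℕ → Fin 3} {w : ℕ → Fin 3}
    (hw : w 0 = 2) (hw1 : w 1 ≠ 2) (n : ℕ) :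
    evalD w (pinSub v y n) = v n := by
  unfold pinSub
  by_cases h : v n = 2
  · rw [if_pos h, blkT_eval2 (y n) hw, h]
  · rw [if_neg h, blkO_eval (v n) h, if_neg (by tauto)]

lemma pin_eval_high {v y : ℕ → Fin 3} {w : ℕ → Fin 3}
    (hw : w 0 = 2) (hw1 : w 1 = 2) (n : ℕ) :
    evalD w (pinSub v y n) = 2 := by
  unfold pinSub
  by_cases h : v n = 2
  · rw [if_pos h, blkT_eval2 (y n) hw]
  · rw [if_neg h, blkO_eval2 (v n) hw hw1]

end Pin

lemma vars_neg_subst (e : ℕ → PropForm) (f : PropForm) :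
    (substP e (.neg f)).vars = (substP e f).vars := rfl

theorem system_R0_TD_based_on_atomic_entailment (φ ψ : PropForm) :
    Cn0 TD (.imp φ ψ) ↔
      ((∀ e : ℕ → PropForm, Cn0 TD (substP e φ) →
          Cn0 TD (substP e ψ) ∧ (substP e φ).vars ⊆ (substP e ψ).vars) ∧
       (∀ e : ℕ → PropForm,
          Cn0 TD (substP e (.imp (.imp (.neg ψ) (.neg φ)) (.neg φ))) →
            Cn0 TD (substP e (.neg φ)) ∧
              (substP e (.neg ψ)).vars ⊆ (substP e (.neg φ)).vars)) := by
  constructor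
  · intro h
    have hTD : PropForm.imp φ ψ ∈ TD := cn0_TD.mp h
    constructor
    · intro e h1
      have h1' : substP e φ ∈ TD := cn0_TD.mp h1
      have himp : PropForm.imp (substP e φ) (substP e ψ) ∈ TD := subst_TD e hTD
      refine ⟨cn0_TD.mpr (TD_mp himp h1'), ?_⟩
      intro m hm
      by_contra hnot
      have hb : evalD (fun k => if k = m then 0 else 2) (substP e ψ) = 2 :=
        eval_all2 (fun n hn => by
          have hne : n ≠ m := fun hnm => hnot (hnm ▸ hn)
          simp [hne])
      have ha2 : evalD (fun k => if k = m then 0 else 2) (substP e φ) ≠ 2 := by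
        intro h2
        have := vars_of_eval2 h2 m hm
        simp at this
      have ha := h1' (fun k => if k = m then 0 else 2)
      have himp' := himp (fun k => if k = m then 0 else 2)
      simp only [evalD] at himp'
      rw [hb] at himp'
      rcases ha with h1a | h1a
      · rw [h1a] at himp'; revert himp'; decide
      · exact ha2 h1a
    · intro e h2
      have h2' : substP e (.imp (.imp (.neg ψ) (.neg φ)) (.neg φ)) ∈ TD := cn0_TD.mp h2
      have himp : PropForm.imp (substP e φ) (substP e ψ) ∈ TD := subst_TD e hTD
      constructor
      · apply cn0_TD.mpr
        intro v
        have hX := h2' v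
        have hI := himp v
        simp only [substP, evalD] at hX hI ⊢
        revert hX hI
        generalize evalD v (substP e φ) = a
        generalize evalD v (substP e ψ) = b
        revert a b; decide
      · intro m hm
        by_contra hnot
        have hm' : m ∈ (substP e ψ).vars := hm
        have hnot' : m ∉ (substP e φ).vars := hnot
        have ha : evalD (fun k => if k = m then 0 else 2) (substP e φ) = 2 :=
          eval_all2 (fun n hn => by
            have hne : n ≠ m := fun hnm => hnot' (hnm ▸ hn)
            simp [hne])
        have hb : evalD (fun k => if k = m then 0 else 2) (substP e ψ) ≠ 2 := by
          intro hb2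
          have := vars_of_eval2 hb2 m hm'
          simp at this
        have hX := h2' (fun k => if k = m then 0 else 2)
        have hI := himp (fun k => if k = m then 0 else 2)
        simp only [substP, evalD] at hX hI
        rw [ha] at hX hI
        revert hX hI hb
        generalize evalD (fun k => if k = m then (0:Fin 3) else 2) (substP e ψ) = b
        revert b; decide
  · rintro ⟨h1, h2⟩
    apply cn0_TD.mpr
    intro v
    by_contra hbad
    simp only [evalD] at hbad
    have hcases : (evalD v φ = 1 ∧ evalD v ψ = 0) ∨ (evalD v φ = 1 ∧ evalD v ψ = 2) ∨
        (evalD v φ = 2 ∧ evalD v ψ = 0) := by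
      revert hbad
      generalize evalD v φ = a; generalize evalD v ψ = b
      revert a b; decide
    by_cases hP : ∃ y : ℕ → Fin 3, (∀ n, y n ≠ 2) ∧
        evalD (fun n => if v n = 2 then y n else v n) φ = 1
    · -- condition (1) attack
      obtain ⟨y, hy2, hy1⟩ := hP
      have hφTD : substP (pinSub v y) φ ∈ TD := by
        intro w
        rw [eval_subst]
        by_cases hw0 : w 0 = 2
        · by_cases hw1 : w 1 = 2
          · exact Or.inr (eval_all2 (fun n _ => pin_eval_high hw0 hw1 n))
          · have hvv : (fun n => evalD w (pinSub v y n)) = v :=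
              funext (pin_eval_mid hw0 hw1)
            rw [hvv]
            rcases hcases with ⟨ha, _⟩ | ⟨ha, _⟩ | ⟨ha, _⟩
            exacts [Or.inl ha, Or.inl ha, Or.inr ha]
        · have hvv : (fun n => evalD w (pinSub v y n)) =
              fun n => if v n = 2 then y n else v n := funext (pin_eval_low hy2 hw0)
          rw [hvv]
          exact Or.inl hy1
      obtain ⟨hψC, hvars⟩ := h1 (pinSub v y) (cn0_TD.mpr hφTD)
      have hψTD : substP (pinSub v y) ψ ∈ TD := cn0_TD.mp hψC
      have hbcontr : evalD v ψ = 0 → False := by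
        intro hb
        have hmem := hψTD (fun k => if k = 1 then 0 else 2)
        rw [eval_subst] at hmem
        have hvv : (fun n => evalD (fun k => if k = 1 then (0:Fin 3) else 2) (pinSub v y n)) = v :=
          funext (pin_eval_mid (by decide) (by decide))
        rw [hvv, hb] at hmem
        revert hmem; decide
      rcases hcases with ⟨ha, hb⟩ | ⟨ha, hb⟩ | ⟨ha, hb⟩
      · exact hbcontr hb
      · -- b = 2, a = 1 : variable contradiction
        have hψT : ∀ n ∈ ψ.vars, v n = 2 := vars_of_eval2 hb
        obtain ⟨n0, hn0, hn0v⟩ : ∃ n ∈ φ.vars, v n ≠ 2 := by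
          by_contra hall
          push_neg at hall
          exact absurd ((eval_all2 hall).symm.trans ha) (by decide)
        have h1mem : (1:ℕ) ∈ (substP (pinSub v y) φ).vars := by
          rw [mem_vars_subst]
          exact ⟨n0, hn0, by simp [pinSub, hn0v, blkO_vars]⟩
        have h1mem' := hvars h1mem
        rw [mem_vars_subst] at h1mem'
        obtain ⟨n, hn, hmemn⟩ := h1mem'
        simp [pinSub, hψT n hn, blkT_vars] at hmemn
      · exact hbcontr hb
    · -- condition (2) attack
      push_neg at hP
      have hA0 : evalD (fun n => if v n = 2 then (0:Fin 3) else v n) φ = 0 := by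
        have hy2' : ∀ n : ℕ, ((fun _ => (0:Fin 3)) n) ≠ 2 := fun _ => by show (0:Fin 3) ≠ 2; decide
        have hne1 := hP (fun _ => 0) hy2'
        have hne2 : evalD (fun n => if v n = 2 then (0:Fin 3) else v n) φ ≠ 2 := by
          intro h2
          obtain ⟨n, hn⟩ := vars_nonempty φ
          have := vars_of_eval2 h2 n hn
          by_cases hv : v n = 2 <;> simp [hv] at this
        revert hne1 hne2
        generalize evalD (fun n => if v n = 2 then (0:Fin 3) else v n) φ = x
        revert x; decide
      have hXTD : substP (pinSub v (fun _ => 0)) (.imp (.imp (.neg ψ) (.neg φ)) (.neg φ)) ∈ TD := by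
        intro w
        rw [eval_subst]
        simp only [evalD]
        by_cases hw0 : w 0 = 2
        · by_cases hw1 : w 1 = 2
          · have hA : evalD (fun n => evalD w (pinSub v (fun _ => 0) n)) φ = 2 :=
              eval_all2 (fun n _ => pin_eval_high hw0 hw1 n)
            have hB : evalD (fun n => evalD w (pinSub v (fun _ => 0) n)) ψ = 2 :=
              eval_all2 (fun n _ => pin_eval_high hw0 hw1 n)
            rw [hA, hB]; decide
          · have hvv : (fun n => evalD w (pinSub v (fun _ => 0) n)) = v :=
              funext (pin_eval_mid hw0 hw1)
            rw [hvv]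
            rcases hcases with ⟨ha, hb⟩ | ⟨ha, hb⟩ | ⟨ha, hb⟩ <;> rw [ha, hb] <;> decide
        · have hvv : (fun n => evalD w (pinSub v (fun _ => 0) n)) =
              fun n => if v n = 2 then (0:Fin 3) else v n :=
            funext (pin_eval_low (fun _ => by show (0:Fin 3) ≠ 2; decide) hw0)
          rw [hvv, hA0]
          generalize evalD (fun n => if v n = 2 then (0:Fin 3) else v n) ψ = b
          revert b; decide
      obtain ⟨hnφC, hvars2⟩ := h2 (pinSub v (fun _ => 0)) (cn0_TD.mpr hXTD)
      have hacontr : evalD v φ = 1 → False := by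
        intro ha
        have hmem := cn0_TD.mp hnφC (fun k => if k = 1 then 0 else 2)
        rw [show substP (pinSub v (fun _ => 0)) (.neg φ) =
              .neg (substP (pinSub v (fun _ => 0)) φ) from rfl] at hmem
        simp only [evalD] at hmem
        rw [eval_subst] at hmem
        have hvv : (fun n => evalD (fun k => if k = 1 then (0:Fin 3) else 2)
            (pinSub v (fun _ => 0) n)) = v :=
          funext (pin_eval_mid (by decide) (by decide))
        rw [hvv, ha] at hmem
        revert hmem; decide
      rcases hcases with ⟨ha, hb⟩ | ⟨ha, hb⟩ | ⟨ha, hb⟩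
      · exact hacontr ha
      · exact hacontr ha
      · -- a = 2, b = 0 : variable contradiction
        have hφT : ∀ n ∈ φ.vars, v n = 2 := vars_of_eval2 ha
        obtain ⟨n0, hn0, hn0v⟩ : ∃ n ∈ ψ.vars, v n ≠ 2 := by
          by_contra hall
          push_neg at hall
          exact absurd ((eval_all2 hall).symm.trans hb) (by decide)
        have h1mem : (1:ℕ) ∈ (substP (pinSub v (fun _ => 0)) (.neg ψ)).vars := by
          rw [vars_neg_subst, mem_vars_subst]
          exact ⟨n0, hn0, by simp [pinSub, hn0v, blkO_vars]⟩
        have h1mem' := hvars2 h1mem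
        rw [vars_neg_subst, mem_vars_subst] at h1mem'
        obtain ⟨n, hn, hmemn⟩ := h1mem'
        simp [pinSub, hφT n hn, blkT_vars] at hmemn
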